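/- Let H ∈ ℝ^{N×N} be symmetric positive definite, G ∈ ℝ^{q×N}, W ∈ ℝ^q, and S ∈ ℝ^{q×n}. Let 𝒳 := {x ∈ ℝ^n : ∃z ∈ ℝ^N with G z ≤ W + S x} be the set of parameters for which the feasible set is nonempty, and for x ∈ 𝒳 let z*(x) denote the (unique) minimizer of z ↦ zᵀ H z over {z : G z ≤ W + S x}. Then the map x ↦ z*(x) is continuous on 𝒳. In particular, the explicit piecewise affine predictive control law, which equals the first m components of z*(x) up to an affine change of variables, is continuous over the boundaries of the polyhedral regions characterizing it. -/

import Mathlib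

open Matrix

open Filter Topology Finset

section helpers

lemma continuous_fold_max {ι X : Type*} [TopologicalSpace X] (s : Finset ι)
    (b : X → ℝ) (f : ι → X → ℝ) (hb : Continuous b) (hf : ∀ i, Continuous (f i)) :
    Continuous fun x => s.fold max (b x) (fun i => f i x) := by
  classical
  induction s using Finset.induction_on with
  | empty => simpa using hb
  | insert _ _ h ih =>
    simp only [Finset.fold_insert h]
    exact (hf _).max ih

lemma continuous_fold_min {ι X : Type*} [TopologicalSpace X] (s : Finset ι)
    (b : X → ℝ) (f : ι → X → ℝ) (hb : Continuous b) (hf : ∀ i, Continuous (f i)) :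
    Continuous fun x => s.fold min (b x) (fun i => f i x) := by
  classical
  induction s using Finset.induction_on with
  | empty => simpa using hb
  | insert _ _ h ih =>
    simp only [Finset.fold_insert h]
    exact (hf _).min ih

lemma continuous_dot {m : Type*} [Fintype m] (a : m → ℝ) :
    Continuous fun v : m → ℝ => a ⬝ᵥ v := by
  unfold dotProduct
  exact continuous_finset_sum _ fun j _ => continuous_const.mul (continuous_apply j)

end helpers

section lsc
lemma lsc_selection (N : ℕ) {ι : Type} [Fintype ι] (g : ι → Fin N → ℝ)
    (b₀ : ι → ℝ) (z₀ : Fin N → ℝ) (h₀ : ∀ i, g i ⬝ᵥ z₀ ≤ b₀ i) :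
    ∃ F : (ι → ℝ) → (Fin N → ℝ),
      (∀ b, (∃ w, ∀ i, g i ⬝ᵥ w ≤ b i) → ∀ i, g i ⬝ᵥ F b ≤ b i) ∧
      Tendsto F (𝓝 b₀) (𝓝 z₀) := by
  induction N generalizing ι with
  | zero =>
    refine ⟨fun _ => z₀, fun b hb i => ?_, tendsto_const_nhds⟩
    obtain ⟨w, hw⟩ := hb
    have : w = z₀ := Subsingleton.elim _ _
    exact this ▸ hw i
  | succ N ih =>
    classical
    set α : ι → ℝ := fun i => g i (Fin.last N) with hαdef
    set a : ι → Fin N → ℝ := fun i => Fin.init (g i) with hadef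
    have hsplit : ∀ (i : ι) (z' : Fin N → ℝ) (t : ℝ),
        g i ⬝ᵥ Fin.snoc z' t = a i ⬝ᵥ z' + α i * t := by
      intro i z' t
      simp [dotProduct, Fin.sum_univ_castSucc, a, α, Fin.init]
    -- the reduced (Fourier–Motzkin) system
    set g' : (ι ⊕ ι × ι) → Fin N → ℝ := fun k =>
      Sum.rec (fun i => if α i = 0 then a i else 0)
        (fun p => if 0 < α p.1 ∧ α p.2 < 0 then α p.1 • a p.2 - α p.2 • a p.1 else 0) k
      with hg'def
    set M : (ι → ℝ) → (ι ⊕ ι × ι) → ℝ := fun b k =>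
      Sum.rec (fun i => if α i = 0 then b i else 0)
        (fun p => if 0 < α p.1 ∧ α p.2 < 0 then α p.1 * b p.2 - α p.2 * b p.1 else 0) k
      with hMdef
    have forward : ∀ (b : ι → ℝ) (w : Fin (N+1) → ℝ), (∀ i, g i ⬝ᵥ w ≤ b i) →
        ∀ k, g' k ⬝ᵥ Fin.init w ≤ M b k := by
      intro b w hw k
      have hw' : ∀ i, a i ⬝ᵥ Fin.init w + α i * w (Fin.last N) ≤ b i := by
        intro i; rw [← hsplit, Fin.snoc_init_self]; exact hw i
      rcases k with i | ⟨i, j⟩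
      · by_cases h : α i = 0
        · simp only [hg'def, hMdef, if_pos h]
          have := hw' i; rw [h] at this; simpa using this
        · simp [hg'def, hMdef, if_neg h]
      · by_cases h : 0 < α i ∧ α j < 0
        · simp only [hg'def, hMdef, if_pos h]
          rw [sub_dotProduct, smul_dotProduct, smul_dotProduct]
          simp only [smul_eq_mul]
          have h1 : α i * (a j ⬝ᵥ Fin.init w + α j * w (Fin.last N)) ≤ α i * b j :=
            mul_le_mul_of_nonneg_left (hw' j) h.1.le
          have h2 : (-α j) * (a i ⬝ᵥ Fin.init w + α i * w (Fin.last N)) ≤ (-α j) * b i :=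
            mul_le_mul_of_nonneg_left (hw' i) (by linarith [h.2])
          nlinarith [h1, h2]
        · simp [hg'def, hMdef, if_neg h]
    obtain ⟨F', hF'feas, hF'tendsto⟩ :=
      ih g' (M b₀) (Fin.init z₀) (forward b₀ z₀ h₀)
    set t₀ : ℝ := z₀ (Fin.last N) with ht₀def
    -- upper bound function and the chosen last coordinate
    set U : (Fin N → ℝ) → (ι → ℝ) → ℝ := fun z' b =>
      Finset.univ.fold min t₀ (fun i => if 0 < α i then (b i - a i ⬝ᵥ z') / α i else t₀)
      with hUdef
    set T : (Fin N → ℝ) → (ι → ℝ) → ℝ := fun z' b =>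
      Finset.univ.fold max (min t₀ (U z' b))
        (fun j => if α j < 0 then (b j - a j ⬝ᵥ z') / α j else min t₀ (U z' b))
      with hTdef
    -- backward direction of Fourier–Motzkin
    have hback : ∀ (b : ι → ℝ) (z' : Fin N → ℝ), (∀ k, g' k ⬝ᵥ z' ≤ M b k) →
        ∀ i, g i ⬝ᵥ Fin.snoc z' (T z' b) ≤ b i := by
      intro b z' hz' i
      rw [hsplit]
      rcases lt_trichotomy (α i) 0 with hi | hi | hi
      · -- lower bound constraint : T ≥ (b i - a i z')/α i
        have hL : (b i - a i ⬝ᵥ z') / α i ≤ T z' b := by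
          rw [hTdef]
          exact (Finset.le_fold_max _).mpr (Or.inr ⟨i, Finset.mem_univ i, by rw [if_pos hi]⟩)
        have := mul_le_mul_of_nonpos_left hL hi.le
        rw [mul_div_cancel₀ _ (ne_of_lt hi)] at this
        linarith
      · have h0 := hz' (Sum.inl i)
        simp only [hg'def, hMdef, if_pos hi] at h0
        rw [hi]; linarith
      · -- upper bound
        have hU0 : U z' b ≤ (b i - a i ⬝ᵥ z') / α i := by
          rw [hUdef]
          exact (Finset.fold_min_le _).mpr (Or.inr ⟨i, Finset.mem_univ i, by rw [if_pos hi]⟩)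
        have hT : T z' b ≤ (b i - a i ⬝ᵥ z') / α i := by
          rw [hTdef]
          refine (Finset.fold_max_le _).mpr ⟨le_trans (min_le_right _ _) hU0, fun j _ => ?_⟩
          by_cases hj : α j < 0
          · rw [if_pos hj]
            have hp := hz' (Sum.inr (i, j))
            have hc : 0 < α i ∧ α j < 0 := ⟨hi, hj⟩
            simp only [hg'def, hMdef] at hp
            rw [if_pos hc, if_pos hc] at hp
            rw [sub_dotProduct, smul_dotProduct, smul_dotProduct] at hp
            simp only [smul_eq_mul] at hp
            have h3 : α j * (b i - a i ⬝ᵥ z') ≤ α i * (b j - a j ⬝ᵥ z') := by nlinarith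
            rw [div_le_iff_of_neg hj, div_mul_eq_mul_div, div_le_iff₀ hi]
            nlinarith
          · rw [if_neg hj]
            exact le_trans (min_le_right _ _) hU0
        have := mul_le_mul_of_nonneg_left hT hi.le
        rw [mul_div_cancel₀ _ (ne_of_gt hi)] at this
        linarith
    -- value of T at the base point
    have hbase : ∀ i, a i ⬝ᵥ Fin.init z₀ + α i * t₀ ≤ b₀ i := by
      intro i; rw [ht₀def, ← hsplit, Fin.snoc_init_self]; exact h₀ i
    have hU0 : U (Fin.init z₀) b₀ = t₀ := by
      rw [hUdef]
      refine le_antisymm ((Finset.fold_min_le _).mpr (Or.inl le_rfl))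
        ((Finset.le_fold_min _).mpr ⟨le_rfl, fun i _ => ?_⟩)
      by_cases hi : 0 < α i
      · rw [if_pos hi, le_div_iff₀ hi]
        have := hbase i; linarith
      · rw [if_neg hi]
    have hT0 : T (Fin.init z₀) b₀ = t₀ := by
      simp only [hTdef, hU0, min_self]
      refine le_antisymm ((Finset.fold_max_le _).mpr ⟨le_rfl, fun j _ => ?_⟩)
        ((Finset.le_fold_max _).mpr (Or.inl le_rfl))
      by_cases hj : α j < 0
      · rw [if_pos hj, div_le_iff_of_neg hj]
        have := hbase j; linarith
      · rw [if_neg hj]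
    -- continuity of T
    have hUcont : Continuous fun p : (Fin N → ℝ) × (ι → ℝ) => U p.1 p.2 := by
      rw [hUdef]
      refine continuous_fold_min _ _ _ continuous_const fun i => ?_
      by_cases hi : 0 < α i
      · simp only [if_pos hi]
        exact (((continuous_apply i).comp continuous_snd).sub
          ((continuous_dot (a i)).comp continuous_fst)).div_const _
      · simp only [if_neg hi]; exact continuous_const
    have hTcont : Continuous fun p : (Fin N → ℝ) × (ι → ℝ) => T p.1 p.2 := by
      rw [hTdef]
      refine continuous_fold_max _ _ _ (continuous_const.min hUcont) fun j => ?_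
      by_cases hj : α j < 0
      · simp only [if_pos hj]
        exact (((continuous_apply j).comp continuous_snd).sub
          ((continuous_dot (a j)).comp continuous_fst)).div_const _
      · simp only [if_neg hj]; exact continuous_const.min hUcont
    have hMcont : Continuous M := by
      rw [hMdef]
      refine continuous_pi fun k => ?_
      rcases k with i | ⟨i, j⟩
      · by_cases h : α i = 0
        · simp only [if_pos h]; exact continuous_apply i
        · simp only [if_neg h]; exact continuous_const
      · by_cases h : 0 < α i ∧ α j < 0
        · simp only [if_pos h]
          exact (continuous_const.mul (continuous_apply j)).sub
            (continuous_const.mul (continuous_apply i))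
        · simp only [if_neg h]; exact continuous_const
    have hsnoccont : Continuous fun p : (Fin N → ℝ) × ℝ => (Fin.snoc p.1 p.2 : Fin (N+1) → ℝ) := by
      refine continuous_pi fun x => ?_
      induction x using Fin.lastCases with
      | last => simpa only [Fin.snoc_last] using continuous_snd
      | cast k => simp only [Fin.snoc_castSucc]; exact (continuous_apply k).comp continuous_fst
    have h1 : Tendsto (fun b => F' (M b)) (𝓝 b₀) (𝓝 (Fin.init z₀)) :=
      hF'tendsto.comp (hMcont.tendsto b₀)
    have h2 : Tendsto (fun b => ((F' (M b) : Fin N → ℝ), b)) (𝓝 b₀) (𝓝 (Fin.init z₀, b₀)) :=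
      h1.prodMk_nhds tendsto_id
    have h3 : Tendsto (fun b => T (F' (M b)) b) (𝓝 b₀) (𝓝 t₀) := by
      have := (hTcont.tendsto (Fin.init z₀, b₀)).comp h2
      rwa [hT0] at this
    refine ⟨fun b => Fin.snoc (F' (M b)) (T (F' (M b)) b), ?_, ?_⟩
    · rintro b ⟨w, hw⟩ i
      exact hback b (F' (M b)) (hF'feas (M b) ⟨Fin.init w, forward b w hw⟩) i
    · have h5 : Tendsto (fun b => ((F' (M b) : Fin N → ℝ), T (F' (M b)) b)) (𝓝 b₀)
          (𝓝 (Fin.init z₀, t₀)) := h1.prodMk_nhds h3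
      have := (hsnoccont.tendsto (Fin.init z₀, t₀)).comp h5
      rwa [show (Fin.snoc (Fin.init z₀) t₀ : Fin (N+1) → ℝ) = z₀ from Fin.snoc_init_self z₀] at this

end lsc

/-- **Continuity of the explicit mp-QP solution.**
Let `H` be symmetric positive definite and let
`𝒳 = {x : ∃ z, G z ≤ W + S x}` be the set of parameters with nonempty feasible
set.  If `zstar x` is, for every `x ∈ 𝒳`, the (unique) minimizer of
`z ↦ zᵀ H z` over `{z : G z ≤ W + S x}`, then `zstar` is continuous on `𝒳`;
in particular the explicit piecewise affine predictive control law is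
continuous over the boundaries of its polyhedral regions. -/
theorem stmt_13 (N q n : ℕ)
    (H : Matrix (Fin N) (Fin N) ℝ) (hH : H.PosDef)
    (G : Matrix (Fin q) (Fin N) ℝ) (W : Fin q → ℝ) (S : Matrix (Fin q) (Fin n) ℝ)
    (zstar : (Fin n → ℝ) → (Fin N → ℝ))
    (hfeas : ∀ x ∈ {x : Fin n → ℝ | ∃ z : Fin N → ℝ, G.mulVec z ≤ W + S.mulVec x},
        G.mulVec (zstar x) ≤ W + S.mulVec x)
    (hmin : ∀ x ∈ {x : Fin n → ℝ | ∃ z : Fin N → ℝ, G.mulVec z ≤ W + S.mulVec x},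
        ∀ z : Fin N → ℝ, G.mulVec z ≤ W + S.mulVec x →
          zstar x ⬝ᵥ H.mulVec (zstar x) ≤ z ⬝ᵥ H.mulVec z) :
    ContinuousOn zstar
      {x : Fin n → ℝ | ∃ z : Fin N → ℝ, G.mulVec z ≤ W + S.mulVec x} := by
  classical
  -- quadratic form facts
  have hQcont : Continuous fun v : Fin N → ℝ => v ⬝ᵥ H.mulVec v := by
    simp only [dotProduct]
    refine continuous_finset_sum _ fun i _ => (continuous_apply i).mul ?_
    exact continuous_dot (fun j => H i j)
  have hQs : ∀ (t : ℝ) (v : Fin N → ℝ),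
      (t • v) ⬝ᵥ H.mulVec (t • v) = t^2 * (v ⬝ᵥ H.mulVec v) := by
    intro t v
    rw [Matrix.mulVec_smul, smul_dotProduct, dotProduct_smul, smul_eq_mul, smul_eq_mul]
    ring
  have hpar : ∀ u v : Fin N → ℝ, (u - v) ⬝ᵥ H.mulVec (u - v)
      = 2*(u ⬝ᵥ H.mulVec u) + 2*(v ⬝ᵥ H.mulVec v)
        - 4*(((1/2 : ℝ) • (u + v)) ⬝ᵥ H.mulVec ((1/2 : ℝ) • (u + v))) := by
    intro u v
    rw [hQs]
    simp only [Matrix.mulVec_add, Matrix.mulVec_sub, add_dotProduct, sub_dotProduct,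
      dotProduct_add, dotProduct_sub]
    ring
  obtain ⟨c, hc0, hcQ⟩ : ∃ c > 0, ∀ v : Fin N → ℝ, c * ‖v‖^2 ≤ v ⬝ᵥ H.mulVec v := by
    rcases subsingleton_or_nontrivial (Fin N → ℝ) with hs | hs
    · refine ⟨1, one_pos, fun v => ?_⟩
      have hv : v = 0 := Subsingleton.elim _ _
      simp [hv]
    · obtain ⟨v₀, hv₀mem, hv₀min⟩ := (isCompact_sphere (0 : Fin N → ℝ) 1).exists_isMinOn
        (NormedSpace.sphere_nonempty.mpr zero_le_one) hQcont.continuousOn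
      have hv₀norm : ‖v₀‖ = 1 := by simpa using hv₀mem
      have hv₀ne : v₀ ≠ 0 := by intro h; rw [h, norm_zero] at hv₀norm; norm_num at hv₀norm
      have hc0 : 0 < v₀ ⬝ᵥ H.mulVec v₀ := by
        have := hH.dotProduct_mulVec_pos hv₀ne
        simpa using this
      refine ⟨v₀ ⬝ᵥ H.mulVec v₀, hc0, fun v => ?_⟩
      rcases eq_or_ne v 0 with hv | hv
      · simp [hv]
      · have hr : 0 < ‖v‖ := norm_pos_iff.mpr hv
        set u : Fin N → ℝ := ‖v‖⁻¹ • v with hu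
        have hunorm : ‖u‖ = 1 := by
          rw [hu, norm_smul, norm_inv, norm_norm, inv_mul_cancel₀ (ne_of_gt hr)]
        have humem : u ∈ Metric.sphere (0 : Fin N → ℝ) 1 := by simpa using hunorm
        have h1 : v₀ ⬝ᵥ H.mulVec v₀ ≤ u ⬝ᵥ H.mulVec u := hv₀min humem
        have h2 : v = ‖v‖ • u := by rw [hu, smul_inv_smul₀ (ne_of_gt hr)]
        have h3 := hQs ‖v‖ u
        rw [← h2] at h3
        nlinarith [sq_nonneg ‖v‖]
  have hQnn : ∀ v : Fin N → ℝ, 0 ≤ v ⬝ᵥ H.mulVec v := by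
    intro v
    refine le_trans ?_ (hcQ v)
    positivity
  -- continuity of the affine data
  have hWS : Continuous fun y : Fin n → ℝ => W + S.mulVec y := by
    refine continuous_const.add (continuous_pi fun i => ?_)
    exact continuous_dot (fun j => S i j)
  intro x hx
  obtain ⟨F, hFfeas, hFtend⟩ := lsc_selection N (fun i j => G i j) (W + S.mulVec x)
    (zstar x) (fun i => hfeas x hx i)
  set zc : (Fin n → ℝ) → Fin N → ℝ := fun y => F (W + S.mulVec y) with hzcdef
  have hzc_tend : Tendsto zc (𝓝 x) (𝓝 (zstar x)) := hFtend.comp (hWS.tendsto x)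
  have hzc_feas : ∀ y ∈ {x : Fin n → ℝ | ∃ z : Fin N → ℝ, G.mulVec z ≤ W + S.mulVec x},
      G.mulVec (zc y) ≤ W + S.mulVec y := by
    intro y hy i
    obtain ⟨w, hw⟩ := hy
    exact hFfeas (W + S.mulVec y) ⟨w, fun i => hw i⟩ i
  -- sequential criterion
  refine tendsto_of_subseq_tendsto fun u hu => ?_
  obtain ⟨hux, huX⟩ := tendsto_nhdsWithin_iff.mp hu
  set V : ℝ := (zstar x) ⬝ᵥ H.mulVec (zstar x) with hVdef
  have hQzc : Tendsto (fun k => (zc (u k)) ⬝ᵥ H.mulVec (zc (u k))) atTop (𝓝 V) :=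
    (hQcont.tendsto _).comp (hzc_tend.comp hux)
  have hub : ∀ᶠ k in atTop,
      (zstar (u k)) ⬝ᵥ H.mulVec (zstar (u k)) ≤ V + 1 := by
    filter_upwards [huX, hQzc.eventually_le_const (lt_add_one V)] with k hk1 hk2
    exact le_trans (hmin (u k) hk1 (zc (u k)) (hzc_feas (u k) hk1)) hk2
  set R : ℝ := Real.sqrt ((V + 1) / c) with hRdef
  have hball : ∀ᶠ k in atTop, zstar (u k) ∈ Metric.closedBall (0 : Fin N → ℝ) R := by
    filter_upwards [hub] with k hk
    have h1 : c * ‖zstar (u k)‖^2 ≤ V + 1 := le_trans (hcQ _) hk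
    rw [Metric.mem_closedBall, dist_zero_right]
    have h2 : ‖zstar (u k)‖^2 ≤ (V + 1) / c := by
      rw [le_div_iff₀ hc0]; linarith [h1]
    calc ‖zstar (u k)‖ = Real.sqrt (‖zstar (u k)‖^2) :=
          (Real.sqrt_sq (norm_nonneg _)).symm
      _ ≤ R := Real.sqrt_le_sqrt h2
  obtain ⟨K, hK⟩ := eventually_atTop.mp ((hball.and huX).and hub)
  set v : ℕ → Fin n → ℝ := fun k => u (k + K) with hvdef
  have hvball : ∀ k, zstar (v k) ∈ Metric.closedBall (0 : Fin N → ℝ) R :=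
    fun k => ((hK (k + K) (Nat.le_add_left K k)).1).1
  have hvX : ∀ k, v k ∈ {x : Fin n → ℝ | ∃ z : Fin N → ℝ, G.mulVec z ≤ W + S.mulVec x} :=
    fun k => ((hK (k + K) (Nat.le_add_left K k)).1).2
  obtain ⟨wbar, hwmem, φ, hφmono, hφtend⟩ :=
    (isCompact_closedBall (0 : Fin N → ℝ) R).tendsto_subseq hvball
  have hvx : Tendsto v atTop (𝓝 x) := hux.comp (tendsto_add_atTop_nat K)
  have hvφx : Tendsto (fun k => v (φ k)) atTop (𝓝 x) := hvx.comp hφmono.tendsto_atTop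
  have h6 : Tendsto (fun k => zc (v (φ k))) atTop (𝓝 (zstar x)) := hzc_tend.comp hvφx
  -- the cluster point is feasible at x
  have hwfeas : G.mulVec wbar ≤ W + S.mulVec x := by
    intro i
    have hL : Tendsto (fun k => (G.mulVec (zstar (v (φ k)))) i) atTop
        (𝓝 ((G.mulVec wbar) i)) :=
      ((continuous_dot (fun j => G i j)).tendsto _).comp hφtend
    have hR : Tendsto (fun k => (W + S.mulVec (v (φ k))) i) atTop
        (𝓝 ((W + S.mulVec x) i)) :=
      (((continuous_apply i).comp hWS).tendsto x).comp hvφx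
    exact le_of_tendsto_of_tendsto' hL hR fun k => (hfeas _ (hvX (φ k))) i
  -- its value equals the optimal value
  have hQw : wbar ⬝ᵥ H.mulVec wbar ≤ V := by
    have hL : Tendsto (fun k => (zstar (v (φ k))) ⬝ᵥ H.mulVec (zstar (v (φ k)))) atTop
        (𝓝 (wbar ⬝ᵥ H.mulVec wbar)) := (hQcont.tendsto _).comp hφtend
    have hR : Tendsto (fun k => (zc (v (φ k))) ⬝ᵥ H.mulVec (zc (v (φ k)))) atTop (𝓝 V) :=
      (hQcont.tendsto _).comp h6
    refine le_of_tendsto_of_tendsto' hL hR fun k => ?_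
    exact hmin _ (hvX (φ k)) _ (hzc_feas _ (hvX (φ k)))
  have hVw : V ≤ wbar ⬝ᵥ H.mulVec wbar := hmin x hx wbar hwfeas
  -- uniqueness of the minimizer
  have hmidfeas : G.mulVec ((1/2 : ℝ) • (zstar x + wbar)) ≤ W + S.mulVec x := by
    intro i
    have h1 := hfeas x hx i
    have h2 := hwfeas i
    rw [Matrix.mulVec_smul, Matrix.mulVec_add]
    simp only [Pi.smul_apply, Pi.add_apply, smul_eq_mul] at *
    linarith
  have hmq := hmin x hx _ hmidfeas
  have hdiff : (zstar x - wbar) ⬝ᵥ H.mulVec (zstar x - wbar) ≤ 0 := by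
    rw [hpar]
    rw [← hVdef] at *
    linarith
  have hzero : zstar x - wbar = 0 := by
    have h1 := hcQ (zstar x - wbar)
    have h3 : c * ‖zstar x - wbar‖^2 ≤ c * 0 := by
      rw [mul_zero]; exact le_trans h1 hdiff
    have h4 : ‖zstar x - wbar‖^2 ≤ 0 := le_of_mul_le_mul_left h3 hc0
    have h2 : ‖zstar x - wbar‖ = 0 := by nlinarith [norm_nonneg (zstar x - wbar)]
    exact norm_eq_zero.mp h2
  have hweq : wbar = zstar x := by
    have := sub_eq_zero.mp hzero
    exact this.symm
  exact ⟨fun k => φ k + K, by rw [← hweq]; exact hφtend⟩
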